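/- arXiv:2203.15168 — 3 statements merged into one kernel-verified Lean document; each statement's English description precedes it below -/
import Mathlib

section
/- For |q| < 1, one has ∑_{n≥0} q^{3·binom(n,2)+2n} (q^4;q^6)_n / (q;q)_{3n+1} = 1 / ((q^2;q^3)_∞ (q;q^6)_∞). -/
open Finset
set_option maxHeartbeats 1000000

noncomputable def qPoch (a q : ℂ) (n : ℕ) : ℂ := ∏ k ∈ Finset.range n, (1 - a * q ^ k)

noncomputable def qPochInf (a q : ℂ) : ℂ := ∏' k : ℕ, (1 - a * q ^ k)

namespace CSS

@[simp] lemma qPoch_zero (a q : ℂ) : qPoch a q 0 = 1 := by simp [qPoch]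

lemma qPoch_succ (a q : ℂ) (n : ℕ) : qPoch a q (n+1) = qPoch a q n * (1 - a * q ^ n) := by
  simp [qPoch, Finset.prod_range_succ]

lemma one_sub_ne (z : ℂ) (h : ‖z‖ < 1) : (1 : ℂ) - z ≠ 0 := by
  intro h0
  have : z = 1 := by linear_combination -h0
  rw [this] at h; simp at h

lemma factor_ne {a Q : ℂ} (ha : ‖a‖ < 1) (hQ : ‖Q‖ ≤ 1) (k : ℕ) : 1 - a * Q ^ k ≠ 0 := by
  apply one_sub_ne
  calc ‖a * Q ^ k‖ = ‖a‖ * ‖Q‖ ^ k := by rw [norm_mul, norm_pow]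
  _ ≤ ‖a‖ * 1 := by
      have := pow_le_one₀ (norm_nonneg Q) hQ (n := k)
      nlinarith [norm_nonneg a]
  _ < 1 := by nlinarith

lemma norm_qPoch_le {a Q : ℂ} (hQ : ‖Q‖ ≤ 1) (n : ℕ) : ‖qPoch a Q n‖ ≤ (1 + ‖a‖) ^ n := by
  induction n with
  | zero => simp
  | succ n ih =>
    rw [qPoch_succ, pow_succ, norm_mul]
    have h1 : ‖(1 : ℂ) - a * Q ^ n‖ ≤ 1 + ‖a‖ := by
      calc ‖(1:ℂ) - a * Q ^ n‖ ≤ ‖(1:ℂ)‖ + ‖a * Q ^ n‖ := norm_sub_le _ _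
      _ = 1 + ‖a‖ * ‖Q‖ ^ n := by rw [norm_one, norm_mul, norm_pow]
      _ ≤ 1 + ‖a‖ := by
          have := pow_le_one₀ (norm_nonneg Q) hQ (n := n)
          nlinarith [norm_nonneg a]
    exact mul_le_mul ih h1 (norm_nonneg _) (by positivity)

lemma norm_qPoch_ge {a Q : ℂ} (ha : ‖a‖ < 1) (hQ : ‖Q‖ ≤ 1) (n : ℕ) :
    (1 - ‖a‖) ^ n ≤ ‖qPoch a Q n‖ := by
  induction n with
  | zero => simp
  | succ n ih =>
    rw [qPoch_succ, pow_succ, norm_mul]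
    have h1 : 1 - ‖a‖ ≤ ‖(1 : ℂ) - a * Q ^ n‖ := by
      have := norm_sub_norm_le (1 : ℂ) (a * Q ^ n)
      rw [norm_one, norm_mul, norm_pow] at this
      have h2 := pow_le_one₀ (norm_nonneg Q) hQ (n := n)
      nlinarith [norm_nonneg a]
    have h0 : (0:ℝ) ≤ 1 - ‖a‖ := by linarith
    exact mul_le_mul ih h1 h0 (norm_nonneg _)

lemma qPoch_ne_zero {a Q : ℂ} (ha : ‖a‖ < 1) (hQ : ‖Q‖ ≤ 1) (n : ℕ) : qPoch a Q n ≠ 0 := by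
  intro h
  have := norm_qPoch_ge ha hQ n
  rw [h, norm_zero] at this
  have h0 : (0:ℝ) < 1 - ‖a‖ := by linarith
  nlinarith [pow_pos h0 n]

end CSS
namespace CSS

lemma summable_log {a Q : ℂ} (ha : ‖a‖ < 1) (hQ : ‖Q‖ < 1) :
    Summable (fun k : ℕ => Complex.log (1 - a * Q ^ k)) := by
  apply Summable.of_norm_bounded_eventually (g := fun k => 3/2 * (‖a‖ * ‖Q‖ ^ k))
  · exact (summable_geometric_of_lt_one (norm_nonneg Q) hQ).mul_left _ |>.mul_left _
  · rw [Nat.cofinite_eq_atTop]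
    have h0 : Filter.Tendsto (fun k : ℕ => ‖a‖ * ‖Q‖ ^ k) Filter.atTop (nhds 0) := by
      simpa using (tendsto_pow_atTop_nhds_zero_of_norm_lt_one (x := ‖Q‖)
        (by simpa using hQ)).const_mul ‖a‖
    filter_upwards [h0.eventually_le_const (by norm_num : (0:ℝ) < 1/2)] with k hk
    have hz : ‖-(a * Q ^ k)‖ ≤ 1/2 := by
      rw [norm_neg, norm_mul, norm_pow]; exact hk
    have := Complex.norm_log_one_add_half_le_self hz
    rw [show (1 : ℂ) + -(a * Q ^ k) = 1 - a * Q ^ k by ring] at this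
    calc ‖Complex.log (1 - a * Q ^ k)‖ ≤ 3/2 * ‖-(a * Q ^ k)‖ := this
    _ = 3/2 * (‖a‖ * ‖Q‖ ^ k) := by rw [norm_neg, norm_mul, norm_pow]

lemma qPochInf_eq_exp {a Q : ℂ} (ha : ‖a‖ < 1) (hQ : ‖Q‖ < 1) :
    qPochInf a Q = Complex.exp (∑' k : ℕ, Complex.log (1 - a * Q ^ k)) := by
  have := Complex.cexp_tsum_eq_tprod (f := fun k => 1 - a * Q ^ k)
    (fun k => factor_ne ha hQ.le k) (summable_log ha hQ)
  exact this.symm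

lemma qPochInf_ne_zero {a Q : ℂ} (ha : ‖a‖ < 1) (hQ : ‖Q‖ < 1) : qPochInf a Q ≠ 0 := by
  rw [qPochInf_eq_exp ha hQ]; exact Complex.exp_ne_zero _

lemma multipliable_qPochInf {a Q : ℂ} (ha : ‖a‖ < 1) (hQ : ‖Q‖ < 1) :
    Multipliable (fun k : ℕ => 1 - a * Q ^ k) :=
  Complex.multipliable_of_summable_log (f := fun k => 1 - a * Q ^ k)
    (summable_log ha hQ)

lemma tendsto_qPoch {a Q : ℂ} (ha : ‖a‖ < 1) (hQ : ‖Q‖ < 1) :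
    Filter.Tendsto (fun N => qPoch a Q N) Filter.atTop (nhds (qPochInf a Q)) :=
  (multipliable_qPochInf ha hQ).hasProd.tendsto_prod_nat

lemma qPoch_add (a Q : ℂ) (N m : ℕ) :
    qPoch a Q (N + m) = qPoch a Q N * qPoch (a * Q ^ N) Q m := by
  induction m with
  | zero => simp
  | succ m ih =>
    rw [show N + (m+1) = (N + m) + 1 by ring, qPoch_succ, ih, qPoch_succ]
    ring

lemma qPochInf_split {a Q : ℂ} (ha : ‖a‖ < 1) (hQ : ‖Q‖ < 1) (N : ℕ) :
    qPochInf a Q = qPoch a Q N * qPochInf (a * Q ^ N) Q := by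
  have haN : ‖a * Q ^ N‖ < 1 := by
    rw [norm_mul, norm_pow]
    calc ‖a‖ * ‖Q‖ ^ N ≤ ‖a‖ * 1 := by
          have := pow_le_one₀ (norm_nonneg Q) hQ.le (n := N)
          nlinarith [norm_nonneg a]
    _ < 1 := by nlinarith
  have h1 : Filter.Tendsto (fun m => qPoch a Q (N + m)) Filter.atTop (nhds (qPochInf a Q)) :=
    (tendsto_qPoch ha hQ).comp (Filter.tendsto_add_atTop_nat N |>.comp Filter.tendsto_id) |>.congr
      (fun m => by simp [Function.comp, Nat.add_comm])
  have h2 : Filter.Tendsto (fun m => qPoch a Q N * qPoch (a * Q ^ N) Q m) Filter.atTop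
      (nhds (qPoch a Q N * qPochInf (a * Q ^ N) Q)) :=
    (tendsto_qPoch haN hQ).const_mul _
  exact tendsto_nhds_unique (h1.congr (fun m => qPoch_add a Q N m)) h2

lemma tsum_norm_log_le {a Q : ℂ} {r : ℝ} (har : ‖a‖ ≤ r) (hr : r < 1) (hQ : ‖Q‖ < 1) :
    ∑' k : ℕ, ‖Complex.log (1 - a * Q ^ k)‖ ≤ (r * (1-r)⁻¹ / 2 + 1) * (r * (1 - ‖Q‖)⁻¹) := by
  have ha : ‖a‖ < 1 := lt_of_le_of_lt har hr
  have hr0 : (0:ℝ) ≤ r := le_trans (norm_nonneg a) har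
  have hsum : Summable (fun k : ℕ => (r * (1-r)⁻¹ / 2 + 1) * (r * ‖Q‖ ^ k)) :=
    ((summable_geometric_of_lt_one (norm_nonneg Q) hQ).mul_left _).mul_left _
  have hb : ∀ k : ℕ, ‖Complex.log (1 - a * Q ^ k)‖ ≤ (r * (1-r)⁻¹ / 2 + 1) * (r * ‖Q‖ ^ k) := by
    intro k
    have hzn : ‖-(a * Q ^ k)‖ ≤ r * ‖Q‖ ^ k := by
      rw [norm_neg, norm_mul, norm_pow]
      have := pow_le_one₀ (norm_nonneg Q) hQ.le (n := k)
      have h2 : (0:ℝ) ≤ ‖Q‖ ^ k := by positivity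
      nlinarith
    have hzr : ‖-(a * Q ^ k)‖ ≤ r := by
      have := pow_le_one₀ (norm_nonneg Q) hQ.le (n := k)
      have h2 : (0:ℝ) ≤ ‖Q‖ ^ k := by positivity
      calc ‖-(a * Q ^ k)‖ ≤ r * ‖Q‖ ^ k := hzn
      _ ≤ r * 1 := by nlinarith
      _ = r := by ring
    have hz1 : ‖-(a * Q ^ k)‖ < 1 := lt_of_le_of_lt hzr hr
    have := Complex.norm_log_one_add_le hz1
    rw [show (1 : ℂ) + -(a * Q ^ k) = 1 - a * Q ^ k by ring] at this
    set z := ‖-(a * Q ^ k)‖ with hzdef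
    have hz0 : 0 ≤ z := norm_nonneg _
    have hinv : (1 - z)⁻¹ ≤ (1 - r)⁻¹ := by
      apply inv_anti₀ (by linarith) (by linarith)
    calc ‖Complex.log (1 - a * Q ^ k)‖ ≤ z ^ 2 * (1 - z)⁻¹ / 2 + z := this
    _ ≤ (r * (1-r)⁻¹ / 2 + 1) * z := by
        have h1 : z ^ 2 * (1 - z)⁻¹ ≤ (r * (1-r)⁻¹) * z := by
          have : z ^ 2 * (1 - z)⁻¹ = z * (1-z)⁻¹ * z := by ring
          rw [this]
          apply mul_le_mul _ le_rfl hz0 (mul_nonneg hr0 (inv_nonneg.mpr (by linarith)))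
          apply mul_le_mul hzr hinv (inv_nonneg.mpr (by linarith)) hr0
        nlinarith
    _ ≤ (r * (1-r)⁻¹ / 2 + 1) * (r * ‖Q‖ ^ k) := by
        apply mul_le_mul le_rfl hzn hz0
        have : (0:ℝ) ≤ (1-r)⁻¹ := inv_nonneg.mpr (by linarith)
        nlinarith
  calc ∑' k : ℕ, ‖Complex.log (1 - a * Q ^ k)‖
      ≤ ∑' k : ℕ, (r * (1-r)⁻¹ / 2 + 1) * (r * ‖Q‖ ^ k) :=
        Summable.tsum_le_tsum hb ((summable_log ha hQ).norm) hsum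
  _ = (r * (1-r)⁻¹ / 2 + 1) * (r * ∑' k : ℕ, ‖Q‖ ^ k) := by
        rw [tsum_mul_left, tsum_mul_left]
  _ = (r * (1-r)⁻¹ / 2 + 1) * (r * (1 - ‖Q‖)⁻¹) := by
        rw [tsum_geometric_of_lt_one (norm_nonneg Q) hQ]

lemma norm_qPochInf_le {a Q : ℂ} {r : ℝ} (har : ‖a‖ ≤ r) (hr : r < 1) (hQ : ‖Q‖ < 1) :
    ‖qPochInf a Q‖ ≤ Real.exp ((r * (1-r)⁻¹ / 2 + 1) * (r * (1 - ‖Q‖)⁻¹)) := by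
  have ha : ‖a‖ < 1 := lt_of_le_of_lt har hr
  rw [qPochInf_eq_exp ha hQ]
  rw [Complex.norm_exp]
  apply Real.exp_le_exp.mpr
  calc (∑' k : ℕ, Complex.log (1 - a * Q ^ k)).re ≤ ‖∑' k : ℕ, Complex.log (1 - a * Q ^ k)‖ :=
        Complex.re_le_norm _
  _ ≤ ∑' k : ℕ, ‖Complex.log (1 - a * Q ^ k)‖ := norm_tsum_le_tsum_norm (summable_log ha hQ).norm
  _ ≤ _ := tsum_norm_log_le har hr hQ

lemma summable_geom_choose {ρ : ℝ} (h0 : 0 ≤ ρ) (hρ : ρ < 1) (r : ℝ) (hr : 0 ≤ r) :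
    Summable (fun n : ℕ => r ^ n * ρ ^ (n.choose 2)) := by
  rcases eq_or_lt_of_le h0 with h | h
  · apply Summable.of_norm_bounded_eventually (g := fun n : ℕ => 0)
    · exact summable_zero
    · rw [Nat.cofinite_eq_atTop]
      filter_upwards [Filter.eventually_ge_atTop 2] with n hn
      have : n.choose 2 ≠ 0 := by
        have := Nat.choose_pos (show 2 ≤ n from hn)
        omega
      rw [← h, zero_pow this, mul_zero, norm_zero]
  · apply summable_of_ratio_norm_eventually_le (r := 1/2) (by norm_num)
    have h0' : Filter.Tendsto (fun n : ℕ => r * ρ ^ n) Filter.atTop (nhds 0) := by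
      simpa using (tendsto_pow_atTop_nhds_zero_of_norm_lt_one (x := ρ)
        (by rwa [Real.norm_eq_abs, abs_of_nonneg h0])).const_mul r
    filter_upwards [h0'.eventually_le_const (by norm_num : (0:ℝ) < 1/2)] with n hn
    have hc : (n+1).choose 2 = n.choose 2 + n := by
      rw [Nat.choose_succ_succ]; simp [Nat.choose_one_right]; ring
    have he : r ^ (n+1) * ρ ^ ((n+1).choose 2) = (r * ρ ^ n) * (r ^ n * ρ ^ (n.choose 2)) := by
      rw [hc, pow_succ, pow_add]; ring
    rw [Real.norm_eq_abs, Real.norm_eq_abs, he, abs_mul]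
    apply mul_le_mul _ le_rfl (abs_nonneg _) (by norm_num)
    rw [abs_of_nonneg (by positivity)]
    exact hn

end CSS
namespace CSS

lemma choose2_succ (n : ℕ) : (n+1).choose 2 = n.choose 2 + n := by
  rw [Nat.choose_succ_succ]; simp [Nat.choose_one_right]; ring

lemma choose2_add (n m : ℕ) : (n+m).choose 2 = n.choose 2 + m.choose 2 + n * m := by
  induction m with
  | zero => simp
  | succ m ih =>
    rw [show n + (m+1) = (n+m)+1 by ring, choose2_succ, ih, choose2_succ]
    ring

/-- The Euler series term. -/
noncomputable def eul (Q t : ℂ) (m : ℕ) : ℂ := (-1)^m * Q^(m.choose 2) * t^m / qPoch Q Q m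

lemma norm_eul_le {Q t : ℂ} (hQ : ‖Q‖ < 1) (ht : ‖t‖ ≤ 1) (m : ℕ) :
    ‖eul Q t m‖ ≤ ((1 - ‖Q‖)⁻¹) ^ m * ‖Q‖ ^ (m.choose 2) := by
  have hQ1 : (0:ℝ) < 1 - ‖Q‖ := by linarith
  have hden : (1 - ‖Q‖) ^ m ≤ ‖qPoch Q Q m‖ := norm_qPoch_ge hQ hQ.le m
  have hdenpos : (0:ℝ) < (1 - ‖Q‖) ^ m := pow_pos hQ1 m
  rw [eul, norm_div, norm_mul, norm_mul, norm_pow, norm_pow, norm_pow, norm_neg, norm_one,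
    one_pow, one_mul]
  calc ‖Q‖ ^ m.choose 2 * ‖t‖ ^ m / ‖qPoch Q Q m‖
      ≤ ‖Q‖ ^ m.choose 2 * 1 / (1 - ‖Q‖) ^ m := by
        apply div_le_div₀ (by positivity) _ hdenpos hden
        have : ‖t‖ ^ m ≤ 1 := pow_le_one₀ (norm_nonneg t) ht
        nlinarith [pow_nonneg (norm_nonneg Q) (m.choose 2), pow_nonneg (norm_nonneg t) m]
  _ = ((1 - ‖Q‖)⁻¹) ^ m * ‖Q‖ ^ (m.choose 2) := by
        rw [div_eq_mul_inv, ← inv_pow]; ring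

lemma norm_eul_le2 {Q t : ℂ} (hQ : ‖Q‖ < 1) (m : ℕ) :
    ‖eul Q t m‖ ≤ ((1 - ‖Q‖)⁻¹) ^ m * ‖t‖ ^ m * ‖Q‖ ^ (m.choose 2) := by
  have hQ1 : (0:ℝ) < 1 - ‖Q‖ := by linarith
  have hden : (1 - ‖Q‖) ^ m ≤ ‖qPoch Q Q m‖ := norm_qPoch_ge hQ hQ.le m
  have hdenpos : (0:ℝ) < (1 - ‖Q‖) ^ m := pow_pos hQ1 m
  rw [eul, norm_div, norm_mul, norm_mul, norm_pow, norm_pow, norm_pow, norm_neg, norm_one,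
    one_pow, one_mul]
  calc ‖Q‖ ^ m.choose 2 * ‖t‖ ^ m / ‖qPoch Q Q m‖
      ≤ ‖Q‖ ^ m.choose 2 * ‖t‖ ^ m / (1 - ‖Q‖) ^ m := div_le_div₀ (by positivity) le_rfl hdenpos hden
  _ = ((1 - ‖Q‖)⁻¹) ^ m * ‖t‖ ^ m * ‖Q‖ ^ (m.choose 2) := by
        rw [div_eq_mul_inv, ← inv_pow]; ring

lemma summable_eul {Q t : ℂ} (hQ : ‖Q‖ < 1) (ht : ‖t‖ ≤ 1) :
    Summable (eul Q t) := by
  have hQ1 : (0:ℝ) < 1 - ‖Q‖ := by linarith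
  exact Summable.of_norm_bounded (summable_geom_choose (norm_nonneg Q) hQ _
    (by positivity : (0:ℝ) ≤ (1 - ‖Q‖)⁻¹)) (norm_eul_le hQ ht)

lemma eul_feq {Q t : ℂ} (hQ : ‖Q‖ < 1) (ht : ‖t‖ ≤ 1) :
    ∑' m, eul Q t m = (1 - t) * ∑' m, eul Q (t * Q) m := by
  have htQ : ‖t * Q‖ ≤ 1 := by
    rw [norm_mul]
    nlinarith [norm_nonneg t, norm_nonneg Q]
  have h1 : Summable (eul Q t) := summable_eul hQ ht
  have h2 : Summable (eul Q (t * Q)) := summable_eul hQ htQ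
  have key : ∑' m, eul Q t m - ∑' m, eul Q (t * Q) m = -t * ∑' m, eul Q (t * Q) m := by
    rw [← Summable.tsum_sub h1 h2]
    have hd : Summable (fun m => eul Q t m - eul Q (t * Q) m) := h1.sub h2
    rw [Summable.tsum_eq_zero_add hd]
    have h00 : eul Q t 0 - eul Q (t * Q) 0 = 0 := by simp [eul]
    rw [h00, zero_add, ← tsum_mul_left]
    apply tsum_congr
    intro m
    have hP : qPoch Q Q m ≠ 0 := qPoch_ne_zero hQ hQ.le m
    have hf : (1 : ℂ) - Q * Q ^ m ≠ 0 := factor_ne hQ hQ.le m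
    rw [eul, eul, eul, qPoch_succ, choose2_succ]
    field_simp
    ring
  linear_combination key

lemma eul_iterate {Q t : ℂ} (hQ : ‖Q‖ < 1) (ht : ‖t‖ ≤ 1) (N : ℕ) :
    ∑' m, eul Q t m = qPoch t Q N * ∑' m, eul Q (t * Q ^ N) m := by
  induction N with
  | zero => simp
  | succ N ih =>
    have htN : ‖t * Q ^ N‖ ≤ 1 := by
      rw [norm_mul, norm_pow]
      have h1 : ‖Q‖ ^ N ≤ 1 := pow_le_one₀ (norm_nonneg Q) hQ.le
      nlinarith [norm_nonneg t, pow_nonneg (norm_nonneg Q) N]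
    rw [ih, eul_feq hQ htN, qPoch_succ]
    rw [show t * Q ^ N * Q = t * Q ^ (N+1) by ring]
    ring

lemma eul_tendsto_one {Q t : ℂ} (hQ : ‖Q‖ < 1) (ht : ‖t‖ ≤ 1) :
    Filter.Tendsto (fun N => ∑' m, eul Q (t * Q ^ N) m) Filter.atTop (nhds 1) := by
  set M : ℝ := ∑' m : ℕ, ((1 - ‖Q‖)⁻¹) ^ (m+1) * ‖Q‖ ^ ((m+1).choose 2) with hM
  have hQ1 : (0:ℝ) < 1 - ‖Q‖ := by linarith
  have hMsum : Summable (fun m : ℕ => ((1 - ‖Q‖)⁻¹) ^ (m+1) * ‖Q‖ ^ ((m+1).choose 2)) := by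
    have := summable_geom_choose (norm_nonneg Q) hQ _ (by positivity : (0:ℝ) ≤ (1 - ‖Q‖)⁻¹)
    exact (summable_nat_add_iff 1).mpr this
  have hM0 : 0 ≤ M := tsum_nonneg (fun m => by positivity)
  have hbound : ∀ N : ℕ, ‖(∑' m, eul Q (t * Q ^ N) m) - 1‖ ≤ ‖Q‖ ^ N * M := by
    intro N
    have htN : ‖t * Q ^ N‖ ≤ 1 := by
      rw [norm_mul, norm_pow]
      have h1 : ‖Q‖ ^ N ≤ 1 := pow_le_one₀ (norm_nonneg Q) hQ.le
      nlinarith [norm_nonneg t, pow_nonneg (norm_nonneg Q) N]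
    have hs : Summable (eul Q (t * Q ^ N)) := summable_eul hQ htN
    have h0 : eul Q (t * Q ^ N) 0 = 1 := by simp [eul]
    have hshift : Summable (fun m => eul Q (t * Q ^ N) (m+1)) := (summable_nat_add_iff 1).mpr hs
    have heq : (∑' m, eul Q (t * Q ^ N) m) - 1 = ∑' m, eul Q (t * Q ^ N) (m+1) := by
      rw [Summable.tsum_eq_zero_add hs, h0]; ring
    rw [heq]
    calc ‖∑' m, eul Q (t * Q ^ N) (m+1)‖ ≤ ∑' m, ‖eul Q (t * Q ^ N) (m+1)‖ :=
          norm_tsum_le_tsum_norm hshift.norm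
    _ ≤ ∑' m : ℕ, ‖Q‖ ^ N * (((1 - ‖Q‖)⁻¹) ^ (m+1) * ‖Q‖ ^ ((m+1).choose 2)) := by
          apply Summable.tsum_le_tsum _ hshift.norm (hMsum.mul_left _)
          intro m
          have hb := norm_eul_le2 (t := t * Q ^ N) hQ (m+1)
          have h1 : ‖t * Q ^ N‖ ^ (m+1) ≤ ‖Q‖ ^ N := by
            calc ‖t * Q ^ N‖ ^ (m+1) ≤ ‖t * Q ^ N‖ ^ 1 :=
                  pow_le_pow_of_le_one (norm_nonneg _) htN (by omega)
            _ = ‖t‖ * ‖Q‖ ^ N := by rw [pow_one, norm_mul, norm_pow]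
            _ ≤ 1 * ‖Q‖ ^ N := mul_le_mul_of_nonneg_right ht (by positivity)
            _ = ‖Q‖ ^ N := one_mul _
          have h2 : (0:ℝ) ≤ ((1 - ‖Q‖)⁻¹) ^ (m+1) := by positivity
          have h3 : (0:ℝ) ≤ ‖Q‖ ^ ((m+1).choose 2) := by positivity
          calc ‖eul Q (t * Q ^ N) (m+1)‖
              ≤ ((1 - ‖Q‖)⁻¹) ^ (m+1) * ‖t * Q ^ N‖ ^ (m+1) * ‖Q‖ ^ ((m+1).choose 2) := hb
          _ = (((1 - ‖Q‖)⁻¹) ^ (m+1) * ‖Q‖ ^ ((m+1).choose 2)) * ‖t * Q ^ N‖ ^ (m+1) := by ring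
          _ ≤ (((1 - ‖Q‖)⁻¹) ^ (m+1) * ‖Q‖ ^ ((m+1).choose 2)) * ‖Q‖ ^ N :=
              mul_le_mul_of_nonneg_left h1 (mul_nonneg h2 h3)
          _ = ‖Q‖ ^ N * (((1 - ‖Q‖)⁻¹) ^ (m+1) * ‖Q‖ ^ ((m+1).choose 2)) := by ring
    _ = ‖Q‖ ^ N * M := by rw [tsum_mul_left]
  have hQN : Filter.Tendsto (fun N : ℕ => ‖Q‖ ^ N * M) Filter.atTop (nhds 0) := by
    simpa using (tendsto_pow_atTop_nhds_zero_of_norm_lt_one (x := ‖Q‖)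
      (by simpa using hQ)).mul_const M
  have : Filter.Tendsto (fun N => (∑' m, eul Q (t * Q ^ N) m) - 1) Filter.atTop (nhds 0) :=
    squeeze_zero_norm hbound hQN
  have h := this.add_const 1
  simpa using h

/-- Euler's identity: `∑ (-1)^m Q^(C(m,2)) t^m / (Q;Q)_m = (t;Q)_∞`. -/
lemma euler {Q t : ℂ} (hQ : ‖Q‖ < 1) (ht : ‖t‖ < 1) :
    ∑' m, eul Q t m = qPochInf t Q := by
  have h1 : Filter.Tendsto (fun N => qPoch t Q N * ∑' m, eul Q (t * Q ^ N) m) Filter.atTop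
      (nhds (qPochInf t Q * 1)) :=
    (tendsto_qPoch ht hQ).mul (eul_tendsto_one hQ ht.le)
  have h2 : Filter.Tendsto (fun _ : ℕ => ∑' m, eul Q t m) Filter.atTop
      (nhds (∑' m, eul Q t m)) := tendsto_const_nhds
  have h3 := tendsto_nhds_unique (h2.congr (fun N => eul_iterate hQ ht.le N)) h1
  rw [h3, mul_one]

end CSS
namespace CSS

lemma key_finite {Q : ℂ} (hQ : ‖Q‖ < 1) (a : ℂ) (N : ℕ) :
    ∑ n ∈ range (N+1), qPoch a Q n * a^(N-n) / (qPoch Q Q n * qPoch Q Q (N-n))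
      = 1 / qPoch Q Q N := by
  induction N with
  | zero => simp
  | succ N ih =>
    have hstep : (1 - Q * Q^N) *
        (∑ n ∈ range (N+2), qPoch a Q n * a^(N+1-n) / (qPoch Q Q n * qPoch Q Q (N+1-n)))
        = ∑ n ∈ range (N+1), qPoch a Q n * a^(N-n) / (qPoch Q Q n * qPoch Q Q (N-n)) := by
      rw [Finset.mul_sum]
      have hsplit : ∀ n ∈ range (N+2),
          (1 - Q * Q^N) * (qPoch a Q n * a^(N+1-n) / (qPoch Q Q n * qPoch Q Q (N+1-n)))
          = (1 - Q^n) * (qPoch a Q n * a^(N+1-n) / (qPoch Q Q n * qPoch Q Q (N+1-n)))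
            + Q^n * (1 - Q^(N+1-n)) *
              (qPoch a Q n * a^(N+1-n) / (qPoch Q Q n * qPoch Q Q (N+1-n))) := by
        intro n hn
        rw [Finset.mem_range] at hn
        have hmul : Q^n * Q^(N+1-n) = Q * Q^N := by
          rw [← pow_add, show n + (N+1-n) = N+1 by omega, pow_succ]
          ring
        set T := qPoch a Q n * a^(N+1-n) / (qPoch Q Q n * qPoch Q Q (N+1-n)) with hT
        linear_combination T * hmul
      rw [Finset.sum_congr rfl hsplit, Finset.sum_add_distrib]
      have hA : ∑ n ∈ range (N+2),
          (1 - Q^n) * (qPoch a Q n * a^(N+1-n) / (qPoch Q Q n * qPoch Q Q (N+1-n)))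
          = ∑ m ∈ range (N+1),
          (1 - Q^(m+1)) * (qPoch a Q (m+1) * a^(N-m) / (qPoch Q Q (m+1) * qPoch Q Q (N-m))) := by
        rw [Finset.sum_range_succ']
        simp only [pow_zero, sub_self, zero_mul, add_zero]
        apply Finset.sum_congr rfl
        intro m hm
        rw [Finset.mem_range] at hm
        rw [show N + 1 - (m+1) = N - m by omega]
      have hB : ∑ n ∈ range (N+2),
          Q^n * (1 - Q^(N+1-n)) *
            (qPoch a Q n * a^(N+1-n) / (qPoch Q Q n * qPoch Q Q (N+1-n)))
          = ∑ n ∈ range (N+1),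
          Q^n * (1 - Q^(N+1-n)) *
            (qPoch a Q n * a^(N+1-n) / (qPoch Q Q n * qPoch Q Q (N+1-n))) := by
        rw [Finset.sum_range_succ]
        simp
      rw [hA, hB, ← Finset.sum_add_distrib]
      apply Finset.sum_congr rfl
      intro m hm
      rw [Finset.mem_range] at hm
      have e1 : N + 1 - m = (N - m) + 1 := by omega
      have e2 : a ^ (N + 1 - m) = a * a ^ (N - m) := by rw [e1, pow_succ]; ring
      have e3 : (Q : ℂ)^(m+1) = Q * Q^m := by rw [pow_succ]; ring
      have e4 : (Q : ℂ)^(N+1-m) = Q * Q^(N-m) := by rw [e1, pow_succ]; ring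
      rw [e2, e3, e4, qPoch_succ, qPoch_succ, e1, qPoch_succ]
      have h1 : qPoch Q Q m ≠ 0 := qPoch_ne_zero hQ hQ.le m
      have h2 : qPoch Q Q (N-m) ≠ 0 := qPoch_ne_zero hQ hQ.le (N-m)
      have h3 : (1 : ℂ) - Q * Q^m ≠ 0 := factor_ne hQ hQ.le m
      have h4 : (1 : ℂ) - Q * Q^(N-m) ≠ 0 := factor_ne hQ hQ.le (N-m)
      field_simp
      ring
    have h5 : (1 : ℂ) - Q * Q^N ≠ 0 := factor_ne hQ hQ.le N
    have h6 : qPoch Q Q N ≠ 0 := qPoch_ne_zero hQ hQ.le N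
    rw [ih] at hstep
    rw [show N + 1 + 1 = N + 2 by ring, qPoch_succ]
    field_simp at hstep ⊢
    linear_combination hstep
end CSS
namespace CSS

lemma tsum_prod_antidiagonal {F : ℕ × ℕ → ℂ} (hF : Summable F) :
    ∑' p : ℕ × ℕ, F p = ∑' N, ∑ kl ∈ Finset.HasAntidiagonal.antidiagonal N, F kl := by
  rw [← Finset.HasAntidiagonal.sigmaAntidiagonalEquivProd.tsum_eq F]
  have hs : Summable (fun x : (Σ N : ℕ, Finset.HasAntidiagonal.antidiagonal N) =>
      F (Finset.HasAntidiagonal.sigmaAntidiagonalEquivProd x)) :=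
    Finset.HasAntidiagonal.sigmaAntidiagonalEquivProd.summable_iff.mpr hF
  rw [Summable.tsum_sigma hs]
  apply tsum_congr
  intro N
  rw [tsum_fintype]
  exact (Finset.sum_finset_coe _ _)

lemma phi11 {a u Q : ℂ} (hQ : ‖Q‖ < 1) (ha : ‖a‖ < 1) (hu : ‖u‖ < 1) :
    ∑' n, qPoch a Q n * Q^(n.choose 2) * (-u)^n * qPochInf (a*u*Q^n) Q / qPoch Q Q n
      = qPochInf u Q := by
  have hQ1 : (0:ℝ) < 1 - ‖Q‖ := by linarith
  have haun : ∀ n : ℕ, ‖a * u * Q ^ n‖ < 1 := by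
    intro n
    rw [norm_mul, norm_mul, norm_pow]
    have h1 : ‖Q‖ ^ n ≤ 1 := pow_le_one₀ (norm_nonneg Q) hQ.le
    have h2 : ‖a‖ * ‖u‖ < 1 := by nlinarith [norm_nonneg a, norm_nonneg u]
    have h3 : (0:ℝ) ≤ ‖a‖ * ‖u‖ := mul_nonneg (norm_nonneg a) (norm_nonneg u)
    nlinarith [pow_nonneg (norm_nonneg Q) n]
  set F : ℕ × ℕ → ℂ := fun p =>
    (-1)^(p.1+p.2) * qPoch a Q p.1 * u^(p.1+p.2) * a^p.2 * Q^((p.1+p.2).choose 2)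
      / (qPoch Q Q p.1 * qPoch Q Q p.2) with hFdef
  -- summability of F
  have hFbound : ∀ p : ℕ × ℕ, ‖F p‖ ≤
      (((1+‖a‖) * ‖u‖ * (1-‖Q‖)⁻¹)^p.1 * ‖Q‖^(p.1.choose 2)) *
      ((‖u‖ * ‖a‖ * (1-‖Q‖)⁻¹)^p.2 * ‖Q‖^(p.2.choose 2)) := by
    rintro ⟨n, m⟩
    have hnorm : ‖F (n, m)‖ = ‖qPoch a Q n‖ * ‖u‖^(n+m) * ‖a‖^m * ‖Q‖^((n+m).choose 2)
        / (‖qPoch Q Q n‖ * ‖qPoch Q Q m‖) := by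
      simp only [hFdef, norm_div, norm_mul, norm_pow, norm_neg, norm_one, one_pow, one_mul]
    rw [hnorm]
    have hd1 : (1 - ‖Q‖) ^ n ≤ ‖qPoch Q Q n‖ := norm_qPoch_ge hQ hQ.le n
    have hd2 : (1 - ‖Q‖) ^ m ≤ ‖qPoch Q Q m‖ := norm_qPoch_ge hQ hQ.le m
    have hdp : (0:ℝ) < (1 - ‖Q‖)^n * (1 - ‖Q‖)^m := by positivity
    have hnum : ‖qPoch a Q n‖ * ‖u‖^(n+m) * ‖a‖^m * ‖Q‖^((n+m).choose 2) ≤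
        (1+‖a‖)^n * ‖u‖^(n+m) * ‖a‖^m * (‖Q‖^(n.choose 2) * ‖Q‖^(m.choose 2)) := by
      have hqp : ‖Q‖^((n+m).choose 2) ≤ ‖Q‖^(n.choose 2 + m.choose 2) := by
        apply pow_le_pow_of_le_one (norm_nonneg Q) hQ.le
        rw [choose2_add]; omega
      rw [← pow_add]
      have h1 := norm_qPoch_le (a := a) hQ.le n
      have hz2 : (0:ℝ) ≤ ‖Q‖^((n+m).choose 2) := by positivity
      apply mul_le_mul _ hqp hz2 (by positivity)
      apply mul_le_mul_of_nonneg_right _ (by positivity : (0:ℝ) ≤ ‖a‖^m)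
      exact mul_le_mul_of_nonneg_right h1 (by positivity)
    calc ‖qPoch a Q n‖ * ‖u‖^(n+m) * ‖a‖^m * ‖Q‖^((n+m).choose 2)
        / (‖qPoch Q Q n‖ * ‖qPoch Q Q m‖)
        ≤ ((1+‖a‖)^n * ‖u‖^(n+m) * ‖a‖^m * (‖Q‖^(n.choose 2) * ‖Q‖^(m.choose 2)))
          / ((1 - ‖Q‖)^n * (1 - ‖Q‖)^m) := by
          apply div_le_div₀ (by positivity) hnum hdp
          exact mul_le_mul hd1 hd2 (by positivity) (norm_nonneg _)
    _ = (((1+‖a‖) * ‖u‖ * (1-‖Q‖)⁻¹)^n * ‖Q‖^(n.choose 2)) *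
        ((‖u‖ * ‖a‖ * (1-‖Q‖)⁻¹)^m * ‖Q‖^(m.choose 2)) := by
        simp only [mul_pow]
        rw [pow_add]
        have hne : (1 - ‖Q‖) ≠ 0 := hQ1.ne'
        rw [inv_pow, inv_pow]
        field_simp
  have hgsum : Summable (fun n : ℕ => ((1+‖a‖) * ‖u‖ * (1-‖Q‖)⁻¹)^n * ‖Q‖^(n.choose 2)) :=
    summable_geom_choose (norm_nonneg Q) hQ _ (by positivity)
  have hhsum : Summable (fun m : ℕ => (‖u‖ * ‖a‖ * (1-‖Q‖)⁻¹)^m * ‖Q‖^(m.choose 2)) :=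
    summable_geom_choose (norm_nonneg Q) hQ _ (by positivity)
  have hF : Summable F :=
    Summable.of_norm_bounded (hgsum.mul_of_nonneg hhsum
      (fun n => by positivity) (fun m => by positivity)) hFbound
  -- termwise expansion
  have hterm : ∀ n : ℕ,
      qPoch a Q n * Q^(n.choose 2) * (-u)^n * qPochInf (a*u*Q^n) Q / qPoch Q Q n
        = ∑' m, F (n, m) := by
    intro n
    rw [← euler hQ (haun n)]
    have hPn : qPoch Q Q n ≠ 0 := qPoch_ne_zero hQ hQ.le n
    rw [show qPoch a Q n * Q^(n.choose 2) * (-u)^n * (∑' m, eul Q (a*u*Q^n) m) / qPoch Q Q n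
        = (qPoch a Q n * Q^(n.choose 2) * (-u)^n / qPoch Q Q n) * ∑' m, eul Q (a*u*Q^n) m by
      ring]
    rw [← tsum_mul_left]
    apply tsum_congr
    intro m
    have hPm : qPoch Q Q m ≠ 0 := qPoch_ne_zero hQ hQ.le m
    simp only [hFdef, eul]
    rw [choose2_add, pow_add, pow_add]
    field_simp
    ring
  calc ∑' n, qPoch a Q n * Q^(n.choose 2) * (-u)^n * qPochInf (a*u*Q^n) Q / qPoch Q Q n
      = ∑' n, ∑' m, F (n, m) := tsum_congr hterm
  _ = ∑' p : ℕ × ℕ, F p := (Summable.tsum_prod' hF hF.prod_factor).symm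
  _ = ∑' N, ∑ kl ∈ Finset.HasAntidiagonal.antidiagonal N, F kl := tsum_prod_antidiagonal hF
  _ = ∑' N, eul Q u N := by
      apply tsum_congr
      intro N
      rw [Finset.Nat.sum_antidiagonal_eq_sum_range_succ_mk]
      have hc : ∀ k ∈ range (N+1), F (k, N - k)
          = ((-1)^N * u^N * Q^(N.choose 2)) *
            (qPoch a Q k * a^(N-k) / (qPoch Q Q k * qPoch Q Q (N-k))) := by
        intro k hk
        rw [Finset.mem_range] at hk
        simp only [hFdef]
        rw [show k + (N - k) = N by omega]
        ring
      rw [Finset.sum_congr rfl hc, ← Finset.mul_sum, key_finite hQ a N, eul]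
      ring
  _ = qPochInf u Q := euler hQ hu

end CSS
open CSS in
theorem stmt11 (q : ℂ) (hq : ‖q‖ < 1) :
    ∑' n : ℕ, (q ^ (3 * n.choose 2 + 2 * n) * qPoch (q ^ 4) (q ^ 6) n / qPoch q q (3 * n + 1))
    = 1 / (qPochInf (q ^ 2) (q ^ 3) * qPochInf q (q ^ 6)) := by
  by_cases hq0 : q = 0
  · subst hq0
    have hz : ∀ Q : ℂ, qPochInf 0 Q = 1 := by
      intro Q; rw [qPochInf]; simp
    rw [show ((0:ℂ)^2) = 0 by norm_num, hz, hz, tsum_eq_single 0]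
    · simp [qPoch]
    · intro n hn
      rw [zero_pow (by omega : 3 * n.choose 2 + 2 * n ≠ 0)]
      simp
  · have hq' : ‖q‖ < 1 := by exact hq
    have hpow : ∀ k : ℕ, k ≠ 0 → ‖q ^ k‖ < 1 := by
      intro k hk
      rw [norm_pow]
      exact pow_lt_one₀ (norm_nonneg q) hq' hk
    have hq2 : ‖q^2‖ < 1 := hpow 2 (by omega)
    have hq3 : ‖q^3‖ < 1 := hpow 3 (by omega)
    have hq4 : ‖q^4‖ < 1 := hpow 4 (by omega)
    have hq6 : ‖q^6‖ < 1 := hpow 6 (by omega)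
    have hnq2 : ‖-q^2‖ < 1 := by rwa [norm_neg]
    -- finite product lemmas
    have hLA : ∀ n : ℕ, qPoch (q^4) (q^6) n = qPoch (q^2) (q^3) n * qPoch (-q^2) (q^3) n := by
      intro n
      rw [qPoch, qPoch, qPoch, ← Finset.prod_mul_distrib]
      apply Finset.prod_congr rfl
      intro k _
      ring
    have hLB : ∀ n : ℕ, qPoch q q (3*n+1)
        = qPoch q (q^3) (n+1) * qPoch (q^2) (q^3) n * qPoch (q^3) (q^3) n := by
      intro n
      induction n with
      | zero => simp [qPoch]
      | succ n ih =>
        rw [show 3*(n+1)+1 = ((3*n+1)+1+1)+1 by ring, qPoch_succ, qPoch_succ, qPoch_succ, ih,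
          show n+1+1 = (n+1)+1 by rfl, qPoch_succ q (q^3) (n+1),
          qPoch_succ (q^2) (q^3) n, qPoch_succ (q^3) (q^3) n]
        ring
    have hLC : ∀ n : ℕ, qPochInf q (q^3)
        = qPoch q (q^3) (n+1) * qPochInf (q^4*(q^3)^n) (q^3) := by
      intro n
      rw [qPochInf_split hq' hq3 (n+1), show q*(q^3)^(n+1) = q^4*(q^3)^n by ring]
    -- termwise identity
    have hterm : ∀ n : ℕ,
        (q ^ (3 * n.choose 2 + 2 * n) * qPoch (q ^ 4) (q ^ 6) n / qPoch q q (3 * n + 1))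
          * qPochInf q (q^3)
        = qPoch (-q^2) (q^3) n * (q^3)^(n.choose 2) * (-(-q^2))^n
            * qPochInf ((-q^2)*(-q^2)*(q^3)^n) (q^3) / qPoch (q^3) (q^3) n := by
      intro n
      have hP1 : qPoch q (q^3) (n+1) ≠ 0 := qPoch_ne_zero hq' hq3.le (n+1)
      have hP2 : qPoch (q^2) (q^3) n ≠ 0 := qPoch_ne_zero hq2 hq3.le n
      have hP3 : qPoch (q^3) (q^3) n ≠ 0 := qPoch_ne_zero hq3 hq3.le n
      rw [hLA n, hLB n, hLC n, show ((-q^2)*(-q^2)*(q^3)^n : ℂ) = q^4*(q^3)^n by ring,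
        show (3 * n.choose 2 + 2 * n) = 3 * n.choose 2 + 2 * n from rfl]
      have hqpow : q ^ (3 * n.choose 2 + 2 * n) = (q^3)^(n.choose 2) * (q^2)^n := by
        rw [pow_add, pow_mul, pow_mul]
      rw [hqpow, show (-(-q^2) : ℂ) = q^2 by ring]
      field_simp
    -- sum the identity
    have hsum : (∑' n : ℕ,
        (q ^ (3 * n.choose 2 + 2 * n) * qPoch (q ^ 4) (q ^ 6) n / qPoch q q (3 * n + 1)))
          * qPochInf q (q^3) = qPochInf (-q^2) (q^3) := by
      rw [← tsum_mul_right]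
      rw [tsum_congr hterm]
      exact phi11 hq3 hnq2 hnq2
    -- product identities
    have hPm : qPochInf (-q^2) (q^3) ≠ 0 := qPochInf_ne_zero hnq2 hq3
    have hP1 : qPochInf (q^2) (q^3) ≠ 0 := qPochInf_ne_zero hq2 hq3
    have hP2 : qPochInf q (q^6) ≠ 0 := qPochInf_ne_zero hq' hq6
    have hi : qPochInf (-q^2) (q^3) * qPochInf (q^2) (q^3) = qPochInf (q^4) (q^6) := by
      rw [qPochInf, qPochInf, qPochInf,
        ← Multipliable.tprod_mul (multipliable_qPochInf hnq2 hq3) (multipliable_qPochInf hq2 hq3)]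
      apply tprod_congr
      intro k
      ring
    have hii : qPochInf q (q^6) * qPochInf (q^4) (q^6) = qPochInf q (q^3) := by
      have he : Multipliable (fun k => 1 - q * (q^3)^(2*k)) := by
        have : (fun k : ℕ => 1 - q * (q^3)^(2*k)) = (fun k : ℕ => 1 - q * (q^6)^k) :=
          funext fun k => by ring
        rw [this]
        exact multipliable_qPochInf hq' hq6
      have ho : Multipliable (fun k => 1 - q * (q^3)^(2*k+1)) := by
        have : (fun k : ℕ => 1 - q * (q^3)^(2*k+1)) = (fun k : ℕ => 1 - q^4 * (q^6)^k) :=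
          funext fun k => by ring
        rw [this]
        exact multipliable_qPochInf hq4 hq6
      have h := tprod_even_mul_odd (f := fun k => 1 - q * (q^3)^k) he ho
      rw [qPochInf, qPochInf, qPochInf, ← h]
      congr 1
      · apply tprod_congr; intro k; ring
      · apply tprod_congr; intro k; ring
    rw [eq_div_iff (mul_ne_zero hP1 hP2)]
    apply mul_right_cancel₀ hPm
    rw [one_mul]
    have hPq_eq : qPochInf q (q^3)
        = qPochInf q (q^6) * (qPochInf (-q^2) (q^3) * qPochInf (q^2) (q^3)) := by
      rw [hi, hii]
    rw [hPq_eq] at hsum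
    linear_combination hsum
end

section
/- One has (3/4)^{1/3} = Γ(5/18)Γ(11/18)Γ(17/18)Γ(1/2) / (Γ(2/9)Γ(5/9)Γ(8/9)Γ(2/3)). -/
noncomputable section
open Filter Set Real
open scoped Topology Real

namespace Trip

/-- Auxiliary: log-convexity of `s ↦ log (Γ (s/3 + c))` on `Ioi 0` for `c ≥ 0`. -/
lemma convexOn_logGamma_comp (c : ℝ) (hc : 0 ≤ c) :
    ConvexOn ℝ (Ioi (0 : ℝ)) (fun s => log (Gamma (s / 3 + c))) := by
  have key : ∀ x : ℝ,
      ((DistribMulAction.toLinearMap ℝ ℝ (3⁻¹ : ℝ)).toAffineMap + AffineMap.const ℝ ℝ c) x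
        = x / 3 + c := by
    intro x
    simp [div_eq_inv_mul]
    rfl
  have h := Real.convexOn_log_Gamma.comp_affineMap
    ((DistribMulAction.toLinearMap ℝ ℝ (3⁻¹ : ℝ)).toAffineMap + AffineMap.const ℝ ℝ c)
  have hsub : Ioi (0 : ℝ) ⊆
      (⇑((DistribMulAction.toLinearMap ℝ ℝ (3⁻¹ : ℝ)).toAffineMap + AffineMap.const ℝ ℝ c))
        ⁻¹' Ioi 0 := by
    intro x hx
    simp only [mem_preimage, key, mem_Ioi]
    have : (0:ℝ) < x / 3 := by simpa using (mem_Ioi.mp hx)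
    linarith
  have h' := (h.subset hsub (convex_Ioi 0))
  refine h'.congr fun x hx => ?_
  simp only [Function.comp_apply, key]

/-- Auxiliary definition for the triplication formula. -/
def triplingGamma (s : ℝ) : ℝ :=
  Gamma (s / 3) * Gamma (s / 3 + 1 / 3) * Gamma (s / 3 + 2 / 3) * 3 ^ (s - 1) * √3 / (2 * π)

lemma triplingGamma_add_one (s : ℝ) (hs : s ≠ 0) :
    triplingGamma (s + 1) = s * triplingGamma s := by
  have h3 : (0:ℝ) < 3 := by norm_num
  have e0 : (s + 1) / 3 = s / 3 + 1 / 3 := by ring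
  have e1 : s / 3 + 1 / 3 + 1 / 3 = s / 3 + 2 / 3 := by ring
  have e2 : s / 3 + 1 / 3 + 2 / 3 = s / 3 + 1 := by ring
  rw [triplingGamma, triplingGamma, (by abel : s + 1 - 1 = s - 1 + 1), rpow_add h3, rpow_one,
    e0, e1, e2, Gamma_add_one (div_ne_zero hs (by norm_num))]
  ring

lemma Gamma_third_mul_Gamma_two_thirds : Gamma (1/3) * Gamma (2/3) = 2 * π / √3 := by
  have h := Real.Gamma_mul_Gamma_one_sub (1/3)
  rw [show (1:ℝ) - 1/3 = 2/3 by norm_num, show π * (1/3) = π / 3 by ring,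
    Real.sin_pi_div_three] at h
  rw [h]
  have h3 : √3 ≠ 0 := by positivity
  field_simp

lemma triplingGamma_one : triplingGamma 1 = 1 := by
  have h := Gamma_third_mul_Gamma_two_thirds
  have h3 : √3 ≠ 0 := by positivity
  have hπ : (2:ℝ) * π ≠ 0 := by positivity
  rw [triplingGamma, show (1:ℝ)/3 + 1/3 = 2/3 by norm_num,
    show (1:ℝ)/3 + 2/3 = 1 by norm_num, Gamma_one, sub_self, rpow_zero, mul_one, mul_one, h]
  field_simp

lemma log_triplingGamma_eq :
    EqOn (log ∘ triplingGamma)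
      (fun s => ((log (Gamma (s / 3 + 0)) + log (Gamma (s / 3 + 1 / 3)))
        + log (Gamma (s / 3 + 2 / 3)) + s * log 3)
        + (log (√3) - log 3 - log (2 * π))) (Ioi 0) := by
  intro s hs
  have hs' : (0:ℝ) < s / 3 := div_pos (mem_Ioi.mp hs) (by norm_num : (0:ℝ) < 3)
  have h1 : Gamma (s / 3) ≠ 0 := (Gamma_pos_of_pos hs').ne'
  have h2 : Gamma (s / 3 + 1 / 3) ≠ 0 := (Gamma_pos_of_pos (by linarith)).ne'
  have h3 : Gamma (s / 3 + 2 / 3) ≠ 0 := (Gamma_pos_of_pos (by linarith)).ne'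
  have h4 : (3:ℝ) ^ (s - 1) ≠ 0 := (rpow_pos_of_pos (by norm_num) _).ne'
  have h5 : √3 ≠ 0 := by positivity
  have h6 : (2:ℝ) * π ≠ 0 := by positivity
  rw [Function.comp_apply, triplingGamma,
    log_div (mul_ne_zero (mul_ne_zero (mul_ne_zero (mul_ne_zero h1 h2) h3) h4) h5) h6,
    log_mul (mul_ne_zero (mul_ne_zero (mul_ne_zero h1 h2) h3) h4) h5,
    log_mul (mul_ne_zero (mul_ne_zero h1 h2) h3) h4,
    log_mul (mul_ne_zero h1 h2) h3, log_mul h1 h2, log_rpow (by norm_num)]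
  simp only [add_zero]
  ring

lemma triplingGamma_log_convex : ConvexOn ℝ (Ioi (0 : ℝ)) (log ∘ triplingGamma) := by
  refine ((((convexOn_logGamma_comp 0 le_rfl).add
      (convexOn_logGamma_comp (1/3) (by norm_num))).add
      (convexOn_logGamma_comp (2/3) (by norm_num))).add ?_).add_const _
      |>.congr log_triplingGamma_eq.symm
  simpa only [mul_comm _ (log _), smul_eq_mul, id_eq] using
    (convexOn_id (convex_Ioi (0 : ℝ))).smul (log_pos (by norm_num : (1:ℝ) < 3)).le

lemma triplingGamma_eq_Gamma {s : ℝ} (hs : 0 < s) : triplingGamma s = Gamma s := by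
  refine Real.eq_Gamma_of_log_convex triplingGamma_log_convex
    (fun {y} hy => triplingGamma_add_one y hy.ne') (fun {y} hy => ?_) triplingGamma_one hs
  have h1 : (0:ℝ) < y / 3 := by positivity
  have := Real.pi_pos
  have g1 : 0 < Gamma (y / 3) := Gamma_pos_of_pos h1
  have g2 : 0 < Gamma (y / 3 + 1 / 3) := Gamma_pos_of_pos (by linarith)
  have g3 : 0 < Gamma (y / 3 + 2 / 3) := Gamma_pos_of_pos (by linarith)
  have g4 : (0:ℝ) < (3:ℝ) ^ (y - 1) := rpow_pos_of_pos (by norm_num) _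
  rw [triplingGamma]
  positivity

/-- Gauss triplication formula. -/
theorem Gamma_triple {s : ℝ} (hs : 0 < s) :
    Gamma (s / 3) * Gamma (s / 3 + 1 / 3) * Gamma (s / 3 + 2 / 3)
      = Gamma s * (2 * π) / (3 ^ (s - 1) * √3) := by
  have h := triplingGamma_eq_Gamma hs
  rw [triplingGamma] at h
  have h4 : (3:ℝ) ^ (s - 1) ≠ 0 := (rpow_pos_of_pos (by norm_num) _).ne'
  have h5 : √3 ≠ 0 := by positivity
  have h6 : (2:ℝ) * π ≠ 0 := by positivity
  field_simp at h ⊢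
  linarith [h]

end Trip


open Real in
theorem stmt18 :
    (3 / 4 : ℝ) ^ ((1 : ℝ) / 3)
    = Real.Gamma (5 / 18) * Real.Gamma (11 / 18) * Real.Gamma (17 / 18) * Real.Gamma (1 / 2)
      / (Real.Gamma (2 / 9) * Real.Gamma (5 / 9) * Real.Gamma (8 / 9) * Real.Gamma (2 / 3)) := by
  have hA := Trip.Gamma_triple (show (0:ℝ) < 5/6 by norm_num)
  rw [show (5:ℝ)/6/3 = 5/18 by norm_num, show (5:ℝ)/18 + 1/3 = 11/18 by norm_num,
    show (5:ℝ)/18 + 2/3 = 17/18 by norm_num, show (5:ℝ)/6 - 1 = -(1/6) by norm_num] at hA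
  have hB := Trip.Gamma_triple (show (0:ℝ) < 2/3 by norm_num)
  rw [show (2:ℝ)/3/3 = 2/9 by norm_num, show (2:ℝ)/9 + 1/3 = 5/9 by norm_num,
    show (2:ℝ)/9 + 2/3 = 8/9 by norm_num, show (2:ℝ)/3 - 1 = -(1/3) by norm_num] at hB
  have h56 := Real.Gamma_mul_Gamma_add_half (1/3)
  rw [show (1:ℝ)/3 + 1/2 = 5/6 by norm_num, show 2 * ((1:ℝ)/3) = 2/3 by norm_num,
    show (1:ℝ) - 2/3 = 1/3 by norm_num] at h56
  have hab := Trip.Gamma_third_mul_Gamma_two_thirds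
  have ha : 0 < Gamma (1/3) := Gamma_pos_of_pos (by norm_num)
  have hb : 0 < Gamma (2/3) := Gamma_pos_of_pos (by norm_num)
  have hs3 : (0:ℝ) < √3 := by positivity
  have hsπ : (0:ℝ) < √π := sqrt_pos_of_pos pi_pos
  have hπ : (0:ℝ) < π := pi_pos
  have hp1 : (0:ℝ) < (3:ℝ) ^ (-(1/6):ℝ) := rpow_pos_of_pos (by norm_num) _
  have hp2 : (0:ℝ) < (3:ℝ) ^ (-(1/3):ℝ) := rpow_pos_of_pos (by norm_num) _
  have hp3 : (0:ℝ) < (2:ℝ) ^ ((1:ℝ)/3) := rpow_pos_of_pos (by norm_num) _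
  have g56 : Gamma (5/6) = Gamma (2/3) * 2 ^ ((1:ℝ)/3) * √π / Gamma (1/3) := by
    field_simp at h56 ⊢
    linarith [h56]
  have hb' : Gamma (2/3) = 2 * π / (√3 * Gamma (1/3)) := by
    field_simp at hab ⊢
    linarith [hab]
  rw [hA, hB, Real.Gamma_one_half_eq, g56, hb']
  rw [show ((3:ℝ)/4) = 3 / 2^(2:ℝ) by norm_num [Real.rpow_natCast 2 2] ]
  rw [Real.div_rpow (by norm_num) (by positivity), ← Real.rpow_mul (by norm_num : (0:ℝ) ≤ 2),
    Real.sqrt_eq_rpow, Real.sqrt_eq_rpow]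
  field_simp
  ring_nf
  have p1 : ((3:ℝ) ^ ((1:ℝ)/2)) ^ 2 = 3 := by
    rw [sq, ← Real.rpow_add (by norm_num : (0:ℝ) < 3)]; norm_num
  have p2 : ((π:ℝ) ^ ((1:ℝ)/2)) ^ 2 = π := by
    rw [sq, ← Real.rpow_add pi_pos]; norm_num
  have p3 : ((3:ℝ) ^ ((1:ℝ)/2)) ^ 3 = 3 * 3 ^ ((1:ℝ)/2) := by
    rw [pow_succ, p1]
  rw [p2]
  have q1 : (3:ℝ) ^ ((1:ℝ)/3) * 3 ^ ((-1:ℝ)/6) = 3 ^ ((1:ℝ)/2) * 3 ^ ((-1:ℝ)/3) := by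
    rw [← Real.rpow_add (by norm_num : (0:ℝ) < 3), ← Real.rpow_add (by norm_num : (0:ℝ) < 3)]
    norm_num
  have q2 : (2:ℝ) ^ ((1:ℝ)/3) * 2 ^ ((2:ℝ)/3) = 2 := by
    rw [← Real.rpow_add (by norm_num : (0:ℝ) < 2)]; norm_num
  linear_combination (2 * π) * q1
    - (π * (3:ℝ) ^ ((1:ℝ)/2) * (3:ℝ) ^ ((-1:ℝ)/3)) * q2
end
end

section
/- One has (3/4)^{1/3} = ∏_{n≥0} (n + 2/9)(n + 5/9)(n + 8/9)(n + 2/3) / ((n + 5/18)(n + 11/18)(n + 17/18)(n + 1/2)). -/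
open Real Filter Finset Nat Stirling Topology

lemma key_prod (z : ℝ) (m : ℕ) :
    (∏ k ∈ range m, ((z + k) * (z + 1/3 + k) * (z + 2/3 + k))) * 27 ^ m
      = ∏ j ∈ range (3 * m), (3 * z + j) := by
  induction m with
  | zero => simp
  | succ m ih =>
    have h3 : 3 * (m + 1) = (3 * m + 1) + 1 + 1 := by ring
    rw [prod_range_succ, pow_succ, h3, prod_range_succ, prod_range_succ, prod_range_succ, ← ih]
    push_cast
    ring

lemma gammaSeq_tripl (z : ℝ) (hz : 0 < z) (n : ℕ) (hn : 1 ≤ n) :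
    Real.GammaSeq z n * Real.GammaSeq (z + 1/3) n * Real.GammaSeq (z + 2/3) n
      = Real.GammaSeq (3 * z) (3 * n) * (3 : ℝ) ^ (-(3 * z))
        * (27 ^ (n + 1) * n * (n ! : ℝ) ^ 3
            / ((3 * n)! * ((3 * z + 3 * n + 1) * (3 * z + 3 * n + 2)))) := by
  have hn0 : (0 : ℝ) < n := by exact_mod_cast hn
  set P1 := ∏ j ∈ range (n + 1), (z + j) with hP1
  set P2 := ∏ j ∈ range (n + 1), (z + 1/3 + j) with hP2
  set P3 := ∏ j ∈ range (n + 1), (z + 2/3 + j) with hP3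
  set D := ∏ j ∈ range (3 * n + 1), (3 * z + j) with hD
  have hP1pos : 0 < P1 := prod_pos fun j _ => by positivity
  have hP2pos : 0 < P2 := prod_pos fun j _ => by positivity
  have hP3pos : 0 < P3 := prod_pos fun j _ => by positivity
  have hDpos : 0 < D := prod_pos fun j _ => by positivity
  set Q := (3 * z + 3 * (n:ℝ) + 1) * (3 * z + 3 * (n:ℝ) + 2) with hQ
  have hQpos : 0 < Q := by positivity
  have hkey : P1 * P2 * P3 * 27 ^ (n + 1) = D * Q := by
    have h := key_prod z (n + 1)
    rw [prod_mul_distrib, prod_mul_distrib] at h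
    have h2 : ∏ j ∈ range (3 * (n+1)), (3 * z + j) = D * Q := by
      have h3 : 3 * (n + 1) = (3 * n + 1) + 1 + 1 := by ring
      rw [h3, prod_range_succ, prod_range_succ, ← hD, hQ]
      push_cast
      ring
    rw [hP1, hP2, hP3, ← h2, ← h]
  set u := (n:ℝ) ^ z with hu
  set v := (n:ℝ) ^ (z + 1/3) with hv
  set w := (n:ℝ) ^ (z + 2/3) with hw
  set X := ((3*n : ℕ) : ℝ) ^ (3*z) with hX
  set t := (3:ℝ) ^ (-(3*z)) with ht
  have hXpos : 0 < X := rpow_pos_of_pos (by positivity) _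
  have htpos : 0 < t := rpow_pos_of_pos (by norm_num) _
  have hUVW : u * v * w = X * t * n := by
    rw [hu, hv, hw, hX, ht]
    have hc : ((3*n : ℕ) : ℝ) = 3 * n := by push_cast; ring
    rw [hc, mul_rpow (by norm_num : (0:ℝ) ≤ 3) hn0.le]
    have h33 : (3:ℝ) ^ (3*z) * (3:ℝ) ^ (-(3*z)) = 1 := by
      rw [← Real.rpow_add (by norm_num : (0:ℝ) < 3)]; simp
    calc (n:ℝ)^z * (n:ℝ)^(z+1/3) * (n:ℝ)^(z+2/3)
        = (n:ℝ)^(z+(z+1/3)+(z+2/3)) := by rw [← Real.rpow_add hn0, ← Real.rpow_add hn0]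
      _ = (n:ℝ)^(3*z+1) := by ring_nf
      _ = (n:ℝ)^(3*z) * (n:ℝ)^(1:ℝ) := by rw [← Real.rpow_add hn0]
      _ = (n:ℝ)^(3*z) * n := by rw [Real.rpow_one]
      _ = 3 ^ (3*z) * (n:ℝ)^(3*z) * 3 ^ (-(3*z)) * n := by
          linear_combination ((n:ℝ)^(3*z) * n) * h33.symm
  have h3nf : ((3*n)! : ℝ) ≠ 0 := by positivity
  have hnf : ((n)! : ℝ) ≠ 0 := by positivity
  rw [Real.GammaSeq, Real.GammaSeq, Real.GammaSeq, Real.GammaSeq, ← hP1, ← hP2, ← hP3, ← hD,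
    ← hu, ← hv, ← hw, ← hX]
  have h27 : ((27:ℝ)) ^ (n+1) ≠ 0 := by positivity
  calc u * ↑n ! / P1 * (v * ↑n ! / P2) * (w * ↑n ! / P3)
      = (u * v * w) * (↑n !)^3 / (P1 * P2 * P3) := by
        field_simp
    _ = (X * t * ↑n) * (↑n !)^3 / (P1 * P2 * P3) := by rw [hUVW]
    _ = (X * t * ↑n) * (↑n !)^3 * 27^(n+1) / (P1 * P2 * P3 * 27^(n+1)) := by
        rw [mul_div_mul_right _ _ h27]
    _ = (X * t * ↑n) * (↑n !)^3 * 27^(n+1) / (D * Q) := by rw [hkey]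
    _ = X * ↑(3*n)! / D * t * (27 ^ (n + 1) * ↑n * (↑n !) ^ 3 / (↑(3*n)! * Q)) := by
        field_simp

lemma tendsto_3n : Tendsto (fun n : ℕ => 3 * n) atTop atTop :=
  tendsto_atTop_atTop.mpr fun b => ⟨b, fun a ha => by omega⟩

lemma aux_nc (c : ℝ) (hc : 0 < c) :
    Tendsto (fun n : ℕ => (n : ℝ) / (3 * n + c)) atTop (𝓝 (1/3)) := by
  have h0 : Tendsto (fun n : ℕ => c / n) atTop (𝓝 0) := tendsto_const_div_atTop_nhds_zero_nat c
  have h1 : Tendsto (fun n : ℕ => (1:ℝ) / (3 + c / n)) atTop (𝓝 (1/3)) := by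
    have := (tendsto_const_nhds (x := (3:ℝ)) (f := atTop)).add h0
    rw [add_zero] at this
    exact (tendsto_const_nhds (x := (1:ℝ))).div this (by norm_num)
  refine h1.congr' ?_
  filter_upwards [eventually_ge_atTop 1] with n hn
  have hn0 : (0:ℝ) < n := by exact_mod_cast hn
  field_simp

lemma stirling_limit (z : ℝ) (hz : 0 < z) :
    Tendsto (fun n : ℕ => 27 ^ (n + 1) * n * (n ! : ℝ) ^ 3
        / ((3 * n)! * ((3 * z + 3 * n + 1) * (3 * z + 3 * n + 2)))) atTop
      (𝓝 (2 * Real.sqrt 3 * π)) := by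
  have hst3 : Tendsto (fun n : ℕ => stirlingSeq (3 * n)) atTop (𝓝 (Real.sqrt π)) :=
    tendsto_stirlingSeq_sqrt_pi.comp tendsto_3n
  have hratio : Tendsto (fun n : ℕ => (stirlingSeq n) ^ 3 / stirlingSeq (3 * n)) atTop
      (𝓝 π) := by
    have h := (tendsto_stirlingSeq_sqrt_pi.pow 3).div hst3
      (by positivity : Real.sqrt π ≠ 0)
    have : (Real.sqrt π) ^ 3 / Real.sqrt π = π := by
      rw [pow_succ, mul_div_assoc, div_self (by positivity), mul_one, sq_sqrt pi_pos.le]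
    rwa [this] at h
  have hnn : Tendsto (fun n : ℕ => (n:ℝ)^2 / ((3 * z + 3 * n + 1) * (3 * z + 3 * n + 2)))
      atTop (𝓝 (1/9)) := by
    have h1 := aux_nc (3 * z + 1) (by linarith)
    have h2 := aux_nc (3 * z + 2) (by linarith)
    have h := h1.mul h2
    norm_num at h
    refine h.congr fun n => ?_
    have d1 : (3 * (n:ℝ) + (3 * z + 1)) ≠ 0 := by positivity
    have d2 : (3 * (n:ℝ) + (3 * z + 2)) ≠ 0 := by positivity
    field_simp
    ring
  have hmain := ((tendsto_const_nhds (x := 54 / Real.sqrt 3)).mul hratio).mul hnn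
  have h3s : Real.sqrt 3 * Real.sqrt 3 = 3 := Real.mul_self_sqrt (by norm_num)
  have hval : 54 / Real.sqrt 3 * π * (1/9) = 2 * Real.sqrt 3 * π := by
    have hs3 : (0:ℝ) < Real.sqrt 3 := by positivity
    have h54 : 54 / Real.sqrt 3 = 18 * Real.sqrt 3 := by
      rw [div_eq_iff (ne_of_gt hs3)]
      linear_combination (-18 : ℝ) * h3s
    rw [h54]
    ring
  rw [hval] at hmain
  refine hmain.congr' ?_
  filter_upwards [eventually_ge_atTop 1] with n hn
  obtain ⟨m, hm⟩ : ∃ m, 3 * n = m + 1 := ⟨3*n - 1, by omega⟩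
  have hn0 : (0:ℝ) < n := by exact_mod_cast hn
  have hstn : 0 < stirlingSeq n := by
    obtain ⟨k, rfl⟩ : ∃ k, n = k + 1 := ⟨n - 1, by omega⟩
    exact stirlingSeq'_pos k
  have hst3n : 0 < stirlingSeq (3 * n) := by rw [hm]; exact stirlingSeq'_pos m
  have hs2n : (0:ℝ) < Real.sqrt (2 * n) := Real.sqrt_pos.mpr (by positivity)
  have hne : (0:ℝ) < ((n:ℝ) / Real.exp 1) ^ n := by positivity
  have hfact : (n ! : ℝ) = stirlingSeq n * (Real.sqrt (2 * n) * ((n:ℝ) / Real.exp 1) ^ n) := by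
    rw [stirlingSeq, div_mul_cancel₀]
    positivity
  have hpows : (((n:ℝ) / Real.exp 1) ^ n) ^ 3 = ((n:ℝ) / Real.exp 1) ^ (3 * n) := by
    rw [← pow_mul, mul_comm]
  have hE : Real.sqrt 3 * Real.sqrt (2 * (n:ℝ)) * ((3:ℝ)^(3*n) * (((n:ℝ) / Real.exp 1) ^ n) ^ 3)
      = Real.sqrt (2 * ((3*n : ℕ):ℝ)) * (((3*n : ℕ):ℝ) / Real.exp 1) ^ (3*n) := by
    rw [hpows]
    push_cast
    rw [show (2:ℝ) * (3 * n) = 3 * (2 * n) by ring, Real.sqrt_mul (by norm_num : (0:ℝ) ≤ 3),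
      show (3:ℝ) * (n:ℝ) / Real.exp 1 = 3 * ((n:ℝ) / Real.exp 1) by ring, mul_pow]
  have hfact3 : ((3 * n)! : ℝ)
      = stirlingSeq (3 * n)
        * (Real.sqrt 3 * Real.sqrt (2 * n) * ((3:ℝ)^(3*n) * (((n:ℝ) / Real.exp 1) ^ n) ^ 3)) := by
    rw [hE, stirlingSeq, div_mul_cancel₀]
    have h1 : (0:ℝ) < ((3*n : ℕ):ℝ) := by exact_mod_cast (by omega : 0 < 3 * n)
    have h2 : (0:ℝ) < Real.sqrt (2 * ((3*n : ℕ):ℝ)) := Real.sqrt_pos.mpr (by positivity)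
    positivity
  have hQ1 : (0:ℝ) < 3 * z + 3 * n + 1 := by positivity
  have hQ2 : (0:ℝ) < 3 * z + 3 * n + 2 := by positivity
  have hsq : Real.sqrt (2*(n:ℝ)) * Real.sqrt (2*(n:ℝ)) = 2 * n := Real.mul_self_sqrt (by positivity)
  have h27 : (27:ℝ) ^ (n+1) = 27 * 3 ^ (3 * n) := by
    rw [pow_succ, show (27:ℝ) = 3^3 by norm_num, ← pow_mul]
    ring
  rw [hfact, hfact3, h27]
  set A := stirlingSeq n with hA
  set B := stirlingSeq (3 * n) with hB
  set S := Real.sqrt (2 * (n:ℝ)) with hS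
  set T := Real.sqrt 3 with hT
  set E := ((n:ℝ) / Real.exp 1) ^ n with hEdef
  set P := (3:ℝ) ^ (3 * n) with hP
  have hPpos : (0:ℝ) < P := by rw [hP]; positivity
  clear_value A B S T E P
  have hS3 : S ^ 3 = 2 * (n:ℝ) * S := by
    calc S^3 = S * S * S := by ring
      _ = 2 * (n:ℝ) * S := by rw [hsq]
  have hcube : (A * (S * E)) ^ 3 = A^3 * (2 * (n:ℝ) * S) * E^3 := by
    rw [mul_pow, mul_pow, hS3]; ring
  rw [hcube]
  have hTpos : (0:ℝ) < T := by rw [hT] at *; positivity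
  field_simp
  ring


theorem Gamma_triple (z : ℝ) (hz : 0 < z) :
    Real.Gamma z * Real.Gamma (z + 1/3) * Real.Gamma (z + 2/3)
      = 2 * Real.sqrt 3 * π * (3:ℝ) ^ (-(3 * z)) * Real.Gamma (3 * z) := by
  have hA : Tendsto (fun n : ℕ => Real.GammaSeq z n * Real.GammaSeq (z + 1/3) n
      * Real.GammaSeq (z + 2/3) n) atTop
      (𝓝 (Real.Gamma z * Real.Gamma (z + 1/3) * Real.Gamma (z + 2/3))) :=
    ((Real.GammaSeq_tendsto_Gamma z).mul (Real.GammaSeq_tendsto_Gamma _)).mul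
      (Real.GammaSeq_tendsto_Gamma _)
  have hB : Tendsto (fun n : ℕ => Real.GammaSeq (3 * z) (3 * n) * (3:ℝ) ^ (-(3 * z))
      * (27 ^ (n + 1) * n * (n ! : ℝ) ^ 3
          / ((3 * n)! * ((3 * z + 3 * n + 1) * (3 * z + 3 * n + 2))))) atTop
      (𝓝 (Real.Gamma (3 * z) * (3:ℝ) ^ (-(3 * z)) * (2 * Real.sqrt 3 * π))) :=
    (((Real.GammaSeq_tendsto_Gamma (3 * z)).comp tendsto_3n).mul tendsto_const_nhds).mul
      (stirling_limit z hz)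
  have heq : (fun n : ℕ => Real.GammaSeq z n * Real.GammaSeq (z + 1/3) n
      * Real.GammaSeq (z + 2/3) n) =ᶠ[atTop]
      (fun n : ℕ => Real.GammaSeq (3 * z) (3 * n) * (3:ℝ) ^ (-(3 * z))
      * (27 ^ (n + 1) * n * (n ! : ℝ) ^ 3
          / ((3 * n)! * ((3 * z + 3 * n + 1) * (3 * z + 3 * n + 2))))) := by
    filter_upwards [eventually_ge_atTop 1] with n hn
    exact gammaSeq_tripl z hz n hn
  have h := tendsto_nhds_unique (hA.congr' heq) hB
  rw [h]
  ring

lemma cube_root_eq {a b : ℝ} (ha : 0 ≤ a) (hb : 0 ≤ b) (h : a ^ (3:ℕ) = b ^ (3:ℕ)) :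
    a = b := by
  have h3 : ∀ x : ℝ, 0 ≤ x → ((x ^ (3:ℕ)) : ℝ) ^ ((1:ℝ)/3) = x := by
    intro x hx
    rw [← Real.rpow_natCast x 3, ← Real.rpow_mul hx]
    norm_num
  rw [← h3 a ha, ← h3 b hb, h]

lemma pow3_rpow (x : ℝ) (hx : 0 ≤ x) (c : ℝ) : (x ^ c) ^ (3:ℕ) = x ^ (c * 3) := by
  rw [Real.rpow_mul hx, show ((3:ℝ)) = ((3:ℕ):ℝ) by norm_num, Real.rpow_natCast]

lemma c34 : (3/4 : ℝ) ^ ((1:ℝ)/3) = 3 ^ ((1:ℝ)/3) * 2 ^ (-(2:ℝ)/3) := by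
  apply cube_root_eq (by positivity) (by positivity)
  rw [mul_pow, pow3_rpow _ (by norm_num), pow3_rpow _ (by norm_num), pow3_rpow _ (by norm_num)]
  norm_num

lemma L_val :
    Real.Gamma (5/18) * Real.Gamma (11/18) * Real.Gamma (17/18) * Real.Gamma (1/2)
      / (Real.Gamma (2/9) * Real.Gamma (5/9) * Real.Gamma (8/9) * Real.Gamma (2/3))
      = (3/4 : ℝ) ^ ((1:ℝ)/3) := by
  have e1 : Real.Gamma (2/9) * Real.Gamma (5/9) * Real.Gamma (8/9)
      = 2 * Real.sqrt 3 * π * (3:ℝ) ^ (-(2/3) : ℝ) * Real.Gamma (2/3) := by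
    have h := Gamma_triple (2/9) (by norm_num)
    norm_num at h
    convert h using 3 <;> norm_num
  have e2 : Real.Gamma (5/18) * Real.Gamma (11/18) * Real.Gamma (17/18)
      = 2 * Real.sqrt 3 * π * (3:ℝ) ^ (-(5/6) : ℝ) * Real.Gamma (5/6) := by
    have h := Gamma_triple (5/18) (by norm_num)
    norm_num at h
    convert h using 3 <;> norm_num
  have dup := Real.Gamma_mul_Gamma_add_half (1/3 : ℝ)
  norm_num at dup
  have rfl1 := Real.Gamma_mul_Gamma_one_sub (1/3 : ℝ)
  norm_num at rfl1
  have hsin : Real.sin (π * (1/3)) = Real.sqrt 3 / 2 := by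
    rw [show π * (1/3 : ℝ) = π/3 by ring, Real.sin_pi_div_three]
  rw [hsin] at rfl1
  have hs3 : (0:ℝ) < Real.sqrt 3 := by positivity
  have refl2 : Real.Gamma (1/3) * Real.Gamma (2/3) * Real.sqrt 3 = 2 * π := by
    rw [rfl1]
    field_simp
  have key : Real.Gamma (5/6) * (2*π) = Real.Gamma (2/3)^2 * 2^((1:ℝ)/3) * Real.sqrt π * Real.sqrt 3 := by
    linear_combination (-Real.Gamma (5/6)) * refl2 + Real.Gamma (2/3) * Real.sqrt 3 * dup
  have g56 : Real.Gamma (5/6) = Real.Gamma (2/3)^2 * 2^((1:ℝ)/3) * Real.sqrt π * Real.sqrt 3 / (2*π) := by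
    rw [eq_div_iff (by positivity)]
    exact key
  have hg23 : 0 < Real.Gamma (2/3) := Real.Gamma_pos_of_pos (by norm_num)
  rw [div_eq_iff (by positivity), e1, e2, Real.Gamma_one_half_eq, g56, c34]
  have hpp : Real.sqrt π * Real.sqrt π = π := Real.mul_self_sqrt pi_pos.le
  have h33 : Real.sqrt 3 * Real.sqrt 3 = 3 := Real.mul_self_sqrt (by norm_num)
  have r3 : (3:ℝ)^(-(5/6) : ℝ) * 3 = 3^((1:ℝ)/3) * 3^(-(2/3) : ℝ) * Real.sqrt 3 := by
    rw [Real.sqrt_eq_rpow, ← Real.rpow_add (by norm_num : (0:ℝ) < 3),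
      ← Real.rpow_add (by norm_num : (0:ℝ) < 3)]
    calc (3:ℝ)^(-(5/6) : ℝ) * 3 = (3:ℝ)^(-(5/6) : ℝ) * 3^(1:ℝ) := by rw [Real.rpow_one]
      _ = (3:ℝ)^((1:ℝ)/6) := by rw [← Real.rpow_add (by norm_num : (0:ℝ) < 3)]; norm_num
      _ = _ := by norm_num
  have r2 : (2:ℝ)^(-(2:ℝ)/3) * 2 = 2^((1:ℝ)/3) := by
    calc (2:ℝ)^(-(2:ℝ)/3) * 2 = (2:ℝ)^(-(2:ℝ)/3) * 2^(1:ℝ) := by rw [Real.rpow_one]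
      _ = _ := by rw [← Real.rpow_add (by norm_num : (0:ℝ) < 2)]; norm_num
  have hx : (3:ℝ)^(-(5/6) : ℝ) = 3^((1:ℝ)/3) * 3^(-(2/3) : ℝ) * Real.sqrt 3 / 3 := by
    linear_combination r3 / 3
  have hy : (2:ℝ)^(-(2:ℝ)/3) = 2^((1:ℝ)/3) / 2 := by
    linear_combination r2 / 2
  rw [hx, hy]
  field_simp
  linear_combination
    (Real.sqrt 3 * Real.sqrt 3) * hpp
    + π * h33

lemma logbound (x : ℝ) (hx : 0 ≤ x) : |Real.log (1 + x) - x| ≤ x ^ 2 := by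
  have hx1 : (0:ℝ) < 1 + x := by linarith
  have h1 : Real.log (1 + x) ≤ x := by
    have := Real.log_le_sub_one_of_pos hx1
    linarith
  have h2 : Real.log ((1 + x)⁻¹) ≤ (1 + x)⁻¹ - 1 := Real.log_le_sub_one_of_pos (by positivity)
  rw [Real.log_inv] at h2
  have h3 : 1 / (1 + x) ≤ 1 - x + x ^ 2 := by
    rw [div_le_iff₀ hx1]
    nlinarith [pow_nonneg hx 3]
  have h4 : x - x ^ 2 ≤ Real.log (1 + x) := by
    rw [inv_eq_one_div] at h2
    linarith
  rw [abs_le]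
  constructor <;> nlinarith

noncomputable def F (n : ℕ) : ℝ :=
  ((n + 2/9) * (n + 5/9) * (n + 8/9) * (n + 2/3)
    / ((n + 5/18) * (n + 11/18) * (n + 17/18) * (n + 1/2)) : ℝ)

lemma Fpos (n : ℕ) : 0 < F n := by unfold F; positivity

lemma log_term (n : ℕ) (hn : 1 ≤ n) (c : ℝ) (hc : 0 < c) :
    Real.log ((n:ℝ) + c) = Real.log n + Real.log (1 + c/n) := by
  have hn0 : (0:ℝ) < n := by exact_mod_cast hn
  rw [← Real.log_mul hn0.ne' (by positivity : (1 + c/(n:ℝ)) ≠ 0)]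
  congr 1
  field_simp

lemma Sbound (n : ℕ) (hn : 1 ≤ n) : |Real.log (F n)| ≤ 8 / (n:ℝ)^2 := by
  have hn0 : (0:ℝ) < n := by exact_mod_cast hn
  set t : ℝ → ℝ := fun c => Real.log (1 + c/(n:ℝ)) - c/(n:ℝ) with ht
  have tb : ∀ c:ℝ, 0 < c → c ≤ 1 → |t c| ≤ 1/(n:ℝ)^2 := by
    intro c h0 h1
    have hx : 0 ≤ c/(n:ℝ) := by positivity
    refine (logbound (c/n) hx).trans ?_
    calc (c/(n:ℝ))^2 ≤ (1/(n:ℝ))^2 := by gcongr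
      _ = 1/(n:ℝ)^2 := by rw [div_pow, one_pow]
  have hp : ∀ c : ℝ, 0 < c → (0:ℝ) < (n:ℝ) + c := fun c hc => by positivity
  have hFeq : Real.log (F n) = (t (2/9) + t (5/9) + t (8/9) + t (2/3))
      - (t (5/18) + t (11/18) + t (17/18) + t (1/2)) := by
    unfold F
    rw [Real.log_div (by positivity) (by positivity),
      Real.log_mul (by positivity) (by positivity),
      Real.log_mul (by positivity) (by positivity),
      Real.log_mul (by positivity) (by positivity),
      Real.log_mul (by positivity) (by positivity),
      Real.log_mul (by positivity) (by positivity),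
      Real.log_mul (by positivity) (by positivity),
      log_term n hn (2/9) (by norm_num), log_term n hn (5/9) (by norm_num),
      log_term n hn (8/9) (by norm_num), log_term n hn (2/3) (by norm_num),
      log_term n hn (5/18) (by norm_num), log_term n hn (11/18) (by norm_num),
      log_term n hn (17/18) (by norm_num), log_term n hn (1/2) (by norm_num)]
    simp only [ht]
    ring
  have b1 := abs_le.mp (tb (2/9) (by norm_num) (by norm_num))
  have b2 := abs_le.mp (tb (5/9) (by norm_num) (by norm_num))
  have b3 := abs_le.mp (tb (8/9) (by norm_num) (by norm_num))
  have b4 := abs_le.mp (tb (2/3) (by norm_num) (by norm_num))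
  have b5 := abs_le.mp (tb (5/18) (by norm_num) (by norm_num))
  have b6 := abs_le.mp (tb (11/18) (by norm_num) (by norm_num))
  have b7 := abs_le.mp (tb (17/18) (by norm_num) (by norm_num))
  have b8 := abs_le.mp (tb (1/2) (by norm_num) (by norm_num))
  rw [hFeq, abs_le]
  have h18 : (8:ℝ)/(n:ℝ)^2 = 8 * (1/(n:ℝ)^2) := by ring
  refine ⟨by rw [h18]; linarith [b1.1, b2.1, b3.1, b4.1, b5.2, b6.2, b7.2, b8.2],
    by rw [h18]; linarith [b1.2, b2.2, b3.2, b4.2, b5.1, b6.1, b7.1, b8.1]⟩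

lemma Ssummable : Summable (fun n : ℕ => Real.log (F n)) := by
  have hg : Summable (fun n : ℕ => (8:ℝ)/(n:ℝ)^2) := by
    have h := (summable_one_div_nat_pow (p := 2)).mpr (by norm_num)
    exact (h.mul_left 8).congr fun n => by ring
  apply hg.of_norm_bounded_eventually_nat
  filter_upwards [eventually_ge_atTop 1] with n hn
  simpa using Sbound n hn

lemma GammaSeq_pos (s : ℝ) (hs : 0 < s) (N : ℕ) (hN : 1 ≤ N) : 0 < Real.GammaSeq s N := by
  rw [Real.GammaSeq]
  have hN0 : (0:ℝ) < N := by exact_mod_cast hN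
  have h1 : (0:ℝ) < (N:ℝ) ^ s := rpow_pos_of_pos hN0 s
  have h2 : (0:ℝ) < ∏ j ∈ range (N + 1), (s + j) := prod_pos fun j _ => by positivity
  positivity

lemma GammaSeq_mul_prod (s : ℝ) (hs : 0 < s) (N : ℕ) :
    Real.GammaSeq s N * ∏ j ∈ range (N + 1), (s + j) = (N:ℝ) ^ s * N ! := by
  rw [Real.GammaSeq, div_mul_cancel₀]
  exact (prod_pos fun j _ => by positivity).ne'

lemma prod_flip (c : ℝ) (N : ℕ) :
    ∏ n ∈ range N, ((n:ℝ) + c) = ∏ j ∈ range N, (c + (j:ℝ)) :=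
  prod_congr rfl fun j _ => add_comm _ _

lemma partial_prod (N : ℕ) (hN : 1 ≤ N) :
    ∏ n ∈ range (N + 1), F n
      = Real.GammaSeq (5/18) N * Real.GammaSeq (11/18) N * Real.GammaSeq (17/18) N
          * Real.GammaSeq (1/2) N
        / (Real.GammaSeq (2/9) N * Real.GammaSeq (5/9) N * Real.GammaSeq (8/9) N
          * Real.GammaSeq (2/3) N) := by
  have hN0 : (0:ℝ) < N := by exact_mod_cast hN
  have split : ∏ n ∈ range (N + 1), F n
      = (∏ j ∈ range (N+1), ((2:ℝ)/9 + j)) * (∏ j ∈ range (N+1), ((5:ℝ)/9 + j))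
          * (∏ j ∈ range (N+1), ((8:ℝ)/9 + j)) * (∏ j ∈ range (N+1), ((2:ℝ)/3 + j))
        / ((∏ j ∈ range (N+1), ((5:ℝ)/18 + j)) * (∏ j ∈ range (N+1), ((11:ℝ)/18 + j))
          * (∏ j ∈ range (N+1), ((17:ℝ)/18 + j)) * (∏ j ∈ range (N+1), ((1:ℝ)/2 + j))) := by
    rw [← prod_flip, ← prod_flip, ← prod_flip, ← prod_flip, ← prod_flip, ← prod_flip,
      ← prod_flip, ← prod_flip]
    unfold F
    rw [prod_div_distrib, prod_mul_distrib, prod_mul_distrib, prod_mul_distrib,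
      prod_mul_distrib, prod_mul_distrib, prod_mul_distrib]
  rw [split]
  have hPpos : ∀ c : ℝ, 0 < c → (0:ℝ) < ∏ j ∈ range (N+1), (c + j) :=
    fun c hc => prod_pos fun j _ => by positivity
  have hGpos : ∀ c : ℝ, 0 < c → (0:ℝ) < Real.GammaSeq c N := fun c hc => GammaSeq_pos c hc N hN
  rw [div_eq_div_iff
    (by have := hPpos (5/18) (by norm_num); have := hPpos (11/18) (by norm_num);
        have := hPpos (17/18) (by norm_num); have := hPpos (1/2) (by norm_num); positivity)
    (by have := hGpos (2/9) (by norm_num); have := hGpos (5/9) (by norm_num);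
        have := hGpos (8/9) (by norm_num); have := hGpos (2/3) (by norm_num); positivity)]
  have key : ∀ s : ℝ, 0 < s → Real.GammaSeq s N * ∏ j ∈ range (N + 1), (s + j)
      = (N:ℝ) ^ s * N ! := fun s hs => GammaSeq_mul_prod s hs N
  have k1 := key (2/9) (by norm_num)
  have k2 := key (5/9) (by norm_num)
  have k3 := key (8/9) (by norm_num)
  have k4 := key (2/3) (by norm_num)
  have k5 := key (5/18) (by norm_num)
  have k6 := key (11/18) (by norm_num)
  have k7 := key (17/18) (by norm_num)
  have k8 := key (1/2) (by norm_num)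
  have hsum : (N:ℝ)^((2:ℝ)/9) * (N:ℝ)^((5:ℝ)/9) * (N:ℝ)^((8:ℝ)/9) * (N:ℝ)^((2:ℝ)/3)
      = (N:ℝ)^((5:ℝ)/18) * (N:ℝ)^((11:ℝ)/18) * (N:ℝ)^((17:ℝ)/18) * (N:ℝ)^((1:ℝ)/2) := by
    rw [← Real.rpow_add hN0, ← Real.rpow_add hN0, ← Real.rpow_add hN0,
      ← Real.rpow_add hN0, ← Real.rpow_add hN0, ← Real.rpow_add hN0]
    norm_num
  calc (∏ j ∈ range (N+1), ((2:ℝ)/9 + j)) * (∏ j ∈ range (N+1), ((5:ℝ)/9 + j))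
          * (∏ j ∈ range (N+1), ((8:ℝ)/9 + j)) * (∏ j ∈ range (N+1), ((2:ℝ)/3 + j))
        * (Real.GammaSeq (2/9) N * Real.GammaSeq (5/9) N * Real.GammaSeq (8/9) N
          * Real.GammaSeq (2/3) N)
      = ((N:ℝ)^((2:ℝ)/9) * ↑N !) * (((N:ℝ)^((5:ℝ)/9)) * ↑N !) * (((N:ℝ)^((8:ℝ)/9)) * ↑N !)
          * (((N:ℝ)^((2:ℝ)/3)) * ↑N !) := by
        rw [← k1, ← k2, ← k3, ← k4]; ring
    _ = ((N:ℝ)^((5:ℝ)/18) * ↑N !) * (((N:ℝ)^((11:ℝ)/18)) * ↑N !) * (((N:ℝ)^((17:ℝ)/18)) * ↑N !)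
          * (((N:ℝ)^((1:ℝ)/2)) * ↑N !) := by
        have : (N:ℝ)^((2:ℝ)/9) * (N:ℝ)^((5:ℝ)/9) * (N:ℝ)^((8:ℝ)/9) * (N:ℝ)^((2:ℝ)/3) * (↑N ! : ℝ)^4
            = (N:ℝ)^((5:ℝ)/18) * (N:ℝ)^((11:ℝ)/18) * (N:ℝ)^((17:ℝ)/18) * (N:ℝ)^((1:ℝ)/2) * (↑N ! : ℝ)^4 := by
          rw [hsum]
        linear_combination this
    _ = Real.GammaSeq (5/18) N * Real.GammaSeq (11/18) N * Real.GammaSeq (17/18) N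
          * Real.GammaSeq (1/2) N
        * ((∏ j ∈ range (N+1), ((5:ℝ)/18 + j)) * (∏ j ∈ range (N+1), ((11:ℝ)/18 + j))
          * (∏ j ∈ range (N+1), ((17:ℝ)/18 + j)) * (∏ j ∈ range (N+1), ((1:ℝ)/2 + j))) := by
        rw [← k5, ← k6, ← k7, ← k8]; ring


theorem stmt19 :
    (3 / 4 : ℝ) ^ ((1 : ℝ) / 3)
    = ∏' n : ℕ, ((n + 2 / 9) * (n + 5 / 9) * (n + 8 / 9) * (n + 2 / 3)
      / ((n + 5 / 18) * (n + 11 / 18) * (n + 17 / 18) * (n + 1 / 2)) : ℝ) := by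
  set L : ℝ := Real.Gamma (5/18) * Real.Gamma (11/18) * Real.Gamma (17/18) * Real.Gamma (1/2)
      / (Real.Gamma (2/9) * Real.Gamma (5/9) * Real.Gamma (8/9) * Real.Gamma (2/3)) with hLdef
  have hgpos : ∀ c : ℝ, 0 < c → 0 < Real.Gamma c := fun c hc => Real.Gamma_pos_of_pos hc
  have hLpos : 0 < L := by
    rw [hLdef]
    have h1 := hgpos (5/18) (by norm_num); have h2 := hgpos (11/18) (by norm_num)
    have h3 := hgpos (17/18) (by norm_num); have h4 := hgpos (1/2) (by norm_num)
    have h5 := hgpos (2/9) (by norm_num); have h6 := hgpos (5/9) (by norm_num)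
    have h7 := hgpos (8/9) (by norm_num); have h8 := hgpos (2/3) (by norm_num)
    positivity
  have hQ1 : Tendsto (fun N : ℕ => ∏ n ∈ range (N + 1), F n) atTop (𝓝 L) := by
    have hden : (Real.Gamma (2/9) * Real.Gamma (5/9) * Real.Gamma (8/9) * Real.Gamma (2/3)) ≠ 0 := by
      have h5 := hgpos (2/9) (by norm_num); have h6 := hgpos (5/9) (by norm_num)
      have h7 := hgpos (8/9) (by norm_num); have h8 := hgpos (2/3) (by norm_num)
      positivity
    have hT : Tendsto (fun N : ℕ =>
        Real.GammaSeq (5/18) N * Real.GammaSeq (11/18) N * Real.GammaSeq (17/18) N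
          * Real.GammaSeq (1/2) N
        / (Real.GammaSeq (2/9) N * Real.GammaSeq (5/9) N * Real.GammaSeq (8/9) N
          * Real.GammaSeq (2/3) N)) atTop (𝓝 L) := by
      rw [hLdef]
      exact ((((Real.GammaSeq_tendsto_Gamma (5/18)).mul (Real.GammaSeq_tendsto_Gamma (11/18))).mul
        (Real.GammaSeq_tendsto_Gamma (17/18))).mul (Real.GammaSeq_tendsto_Gamma (1/2))).div
        (((((Real.GammaSeq_tendsto_Gamma (2/9)).mul (Real.GammaSeq_tendsto_Gamma (5/9))).mul
        (Real.GammaSeq_tendsto_Gamma (8/9))).mul (Real.GammaSeq_tendsto_Gamma (2/3)))) hden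
    refine hT.congr' ?_
    filter_upwards [eventually_ge_atTop 1] with N hN
    exact (partial_prod N hN).symm
  have hQ : Tendsto (fun N : ℕ => ∏ n ∈ range N, F n) atTop (𝓝 L) :=
    (tendsto_add_atTop_iff_nat 1).mp hQ1
  have hlogQ : Tendsto (fun N : ℕ => ∑ n ∈ range N, Real.log (F n)) atTop (𝓝 (Real.log L)) := by
    have h := ((Real.continuousAt_log hLpos.ne').tendsto.comp hQ)
    exact h.congr fun N => Real.log_prod fun n _ => (Fpos n).ne'
  have htsum : ∑' n : ℕ, Real.log (F n) = Real.log L :=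
    tendsto_nhds_unique Ssummable.hasSum.tendsto_sum_nat hlogQ
  have hprod : HasProd F L := by
    have h := Ssummable.hasSum.rexp
    rw [htsum, Real.exp_log hLpos] at h
    have hfun : (Real.exp ∘ fun n : ℕ => Real.log (F n)) = F :=
      funext fun n => Real.exp_log (Fpos n)
    rwa [hfun] at h
  have htp : ∏' n : ℕ, F n = L := hprod.tprod_eq
  calc (3 / 4 : ℝ) ^ ((1 : ℝ) / 3) = L := L_val.symm
    _ = ∏' n : ℕ, F n := htp.symm
    _ = _ := by rfl
end
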